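/- Let w ∈ C³ on the union Q of two triangles K¹ (vertices (x_i,y_j), (x_{i+1},y_j), (x_i,y_{j+1})) and K² (vertices (x_i,y_j), (x_{i+1},y_{j−1}), (x_{i+1},y_j)) forming a parallelogram with side lengths hₓ = x_{i+1}−x_i and h_y = y_{j+1}−y_j = y_j − y_{j−1}, and let wᴵ be the piecewise-linear nodal interpolant on these two triangles. Then |∫_Q ∂ₓ(w − wᴵ) dx dy| ≤ C · meas(Q) · Σ_{l+m=2} hₓ^l h_y^m ‖∂ₓ^{l+1}∂_y^m w‖_{L^∞(Q)} for an absolute constant C. -/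

import Mathlib

open MeasureTheory

section AuxLemmas
open Set

lemma cont_of_deriv {f f' : ℝ → ℝ} (hd : ∀ t, HasDerivAt f (f' t) t) : Continuous f :=
  continuous_iff_continuousAt.2 fun t => (hd t).continuousAt

lemma mvt_abs {f f' : ℝ → ℝ} (hd : ∀ t, HasDerivAt f (f' t) t)
    {a b M : ℝ} (hM : ∀ t ∈ Set.uIcc a b, |f' t| ≤ M) : |f b - f a| ≤ M * |b - a| := by
  have h := Convex.norm_image_sub_le_of_norm_hasDerivWithin_le
    (f := f) (f' := f') (C := M) (s := Set.uIcc a b)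
    (fun x hx => (hd x).hasDerivWithinAt) hM (convex_uIcc a b)
    (Set.left_mem_uIcc) (Set.right_mem_uIcc)
  simpa [Real.norm_eq_abs] using h

lemma ftc {f f' : ℝ → ℝ} (hd : ∀ t, HasDerivAt f (f' t) t) (hc : Continuous f') (a b : ℝ) :
    ∫ t in a..b, f' t = f b - f a :=
  intervalIntegral.integral_eq_sub_of_hasDerivAt (fun t _ => hd t) (hc.intervalIntegrable a b)

lemma taylor1 {f f' : ℝ → ℝ} (hd : ∀ t, HasDerivAt f (f' t) t) (hc : Continuous f')
    {a b K M : ℝ} (hM : ∀ t ∈ Set.uIcc a b, |f' t - K| ≤ M) :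
    |f b - f a - (b - a) * K| ≤ M * |b - a| := by
  have h1 : f b - f a - (b - a) * K = ∫ t in a..b, (f' t - K) := by
    rw [intervalIntegral.integral_sub (hc.intervalIntegrable a b)
      (intervalIntegrable_const), ftc hd hc, intervalIntegral.integral_const, smul_eq_mul]
  rw [h1]
  have := intervalIntegral.norm_integral_le_of_norm_le_const
    (f := fun t => f' t - K) (C := M) (a := a) (b := b)
    (fun t ht => by simpa [Real.norm_eq_abs] using hM t (Set.uIoc_subset_uIcc ht))
  simpa [Real.norm_eq_abs, abs_sub_comm b a] using this

lemma combo_mem_convexHull3 {A B C : ℝ × ℝ} {a b c : ℝ} (ha : 0 ≤ a) (hb : 0 ≤ b)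
    (hc : 0 ≤ c) (habc : a + b + c = 1) :
    a • A + b • B + c • C ∈ convexHull ℝ ({A, B, C} : Set (ℝ × ℝ)) := by
  have := Finset.centerMass_mem_convexHull (t := (Finset.univ : Finset (Fin 3)))
    (w := ![a, b, c]) (z := ![A, B, C]) (s := ({A, B, C} : Set (ℝ × ℝ)))
    (by intro i _; fin_cases i <;> simpa)
    (by simp [Fin.sum_univ_three, habc])
    (by intro i _; fin_cases i <;> simp)
  simpa [Finset.centerMass, Fin.sum_univ_three, habc] using this

set_option maxHeartbeats 1000000 in
lemma hull_union_eq (x₀ y₀ hx hy : ℝ) (hx0 : 0 < hx) (hy0 : 0 < hy) :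
    (convexHull ℝ {((x₀:ℝ),(y₀:ℝ)), (x₀ + hx, y₀), (x₀, y₀ + hy)} ∪
     convexHull ℝ {((x₀:ℝ),(y₀:ℝ)), (x₀ + hx, y₀ - hy), (x₀ + hx, y₀)}) =
    {p : ℝ × ℝ | p.1 ∈ Icc x₀ (x₀ + hx) ∧
      p.2 ∈ Icc (y₀ - (p.1 - x₀) * (hy / hx)) (y₀ - (p.1 - x₀) * (hy / hx) + hy)} := by
  have hxne : hx ≠ 0 := ne_of_gt hx0
  have hyne : hy ≠ 0 := ne_of_gt hy0
  have hkey : hx * (hy / hx) = hy := by field_simp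
  set Sreg : Set (ℝ × ℝ) := {p : ℝ × ℝ | p.1 ∈ Icc x₀ (x₀ + hx) ∧
      p.2 ∈ Icc (y₀ - (p.1 - x₀) * (hy / hx)) (y₀ - (p.1 - x₀) * (hy / hx) + hy)} with hSreg
  have hconv : Convex ℝ Sreg := by
    intro p hp q hq a b ha hb hab
    have hb1 : b = 1 - a := by linarith
    subst hb1
    have ha1 : a ≤ 1 := by linarith
    simp only [hSreg, Set.mem_setOf_eq, Set.mem_Icc] at hp hq ⊢
    obtain ⟨⟨hp1, hp2⟩, hp3, hp4⟩ := hp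
    obtain ⟨⟨hq1, hq2⟩, hq3, hq4⟩ := hq
    simp only [Prod.fst_add, Prod.snd_add, Prod.smul_fst, Prod.smul_snd, smul_eq_mul]
    have e1 := mul_le_mul_of_nonneg_left hp1 ha
    have e2 := mul_le_mul_of_nonneg_left hp2 ha
    have e3 := mul_le_mul_of_nonneg_left hp3 ha
    have e4 := mul_le_mul_of_nonneg_left hp4 ha
    have f1 := mul_le_mul_of_nonneg_left hq1 hb
    have f2 := mul_le_mul_of_nonneg_left hq2 hb
    have f3 := mul_le_mul_of_nonneg_left hq3 hb
    have f4 := mul_le_mul_of_nonneg_left hq4 hb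
    refine ⟨⟨by nlinarith, by nlinarith⟩, by nlinarith, by nlinarith⟩
  apply Set.Subset.antisymm
  · apply Set.union_subset
    · apply convexHull_min _ hconv
      intro v hv
      simp only [Set.mem_insert_iff, Set.mem_singleton_iff] at hv
      rcases hv with rfl | rfl | rfl <;>
        · simp only [hSreg, Set.mem_setOf_eq, Set.mem_Icc]
          refine ⟨⟨by nlinarith, by nlinarith⟩, by nlinarith, by nlinarith⟩
    · apply convexHull_min _ hconv
      intro v hv
      simp only [Set.mem_insert_iff, Set.mem_singleton_iff] at hv
      rcases hv with rfl | rfl | rfl <;>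
        · simp only [hSreg, Set.mem_setOf_eq, Set.mem_Icc]
          refine ⟨⟨by nlinarith, by nlinarith⟩, by nlinarith, by nlinarith⟩
  · intro p hp
    simp only [hSreg, Set.mem_setOf_eq, Set.mem_Icc] at hp
    obtain ⟨⟨hp1, hp2⟩, hp3, hp4⟩ := hp
    by_cases hcase : y₀ ≤ p.2
    · apply Set.mem_union_left
      have hmem := combo_mem_convexHull3 (A := ((x₀:ℝ), (y₀:ℝ))) (B := (x₀ + hx, y₀))
        (C := (x₀, y₀ + hy))
        (a := ((y₀ - (p.1 - x₀) * (hy / hx) + hy) - p.2) / hy)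
        (b := (p.1 - x₀) / hx) (c := (p.2 - y₀) / hy)
        (div_nonneg (by linarith) hy0.le) (div_nonneg (by linarith) hx0.le)
        (div_nonneg (by linarith) hy0.le) (by field_simp; ring)
      have heq : (((y₀ - (p.1 - x₀) * (hy / hx) + hy) - p.2) / hy) • ((x₀:ℝ), (y₀:ℝ)) +
          ((p.1 - x₀) / hx) • ((x₀ + hx:ℝ), (y₀:ℝ)) +
          ((p.2 - y₀) / hy) • ((x₀:ℝ), (y₀ + hy:ℝ)) = p := by
        apply Prod.ext <;>
          · simp only [Prod.fst_add, Prod.snd_add, Prod.smul_fst, Prod.smul_snd, smul_eq_mul]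
            field_simp
            ring
      rwa [heq] at hmem
    · apply Set.mem_union_right
      push_neg at hcase
      have hmem := combo_mem_convexHull3 (A := ((x₀:ℝ), (y₀:ℝ))) (B := (x₀ + hx, y₀ - hy))
        (C := (x₀ + hx, y₀))
        (a := ((x₀ + hx) - p.1) / hx) (b := (y₀ - p.2) / hy)
        (c := (p.2 - (y₀ - (p.1 - x₀) * (hy / hx))) / hy)
        (div_nonneg (by linarith) hx0.le) (div_nonneg (by linarith) hy0.le)
        (div_nonneg (by linarith) hy0.le) (by field_simp; ring)
      have heq : (((x₀ + hx) - p.1) / hx) • ((x₀:ℝ), (y₀:ℝ)) +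
          ((y₀ - p.2) / hy) • ((x₀ + hx:ℝ), (y₀ - hy:ℝ)) +
          ((p.2 - (y₀ - (p.1 - x₀) * (hy / hx))) / hy) • ((x₀ + hx:ℝ), (y₀:ℝ)) = p := by
        apply Prod.ext <;>
          · simp only [Prod.fst_add, Prod.snd_add, Prod.smul_fst, Prod.smul_snd, smul_eq_mul]
            field_simp
            ring
      rwa [heq] at hmem

lemma shear_mp (g : ℝ → ℝ) (hg : Continuous g) :
    MeasurePreserving (fun p : ℝ × ℝ => (p.1, g p.1 + p.2)) volume volume := by
  rw [Measure.volume_eq_prod]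
  exact (MeasurePreserving.id volume).skew_product
    (g := fun a c => g a + c)
    (((hg.comp continuous_fst).add continuous_snd).measurable)
    (Filter.Eventually.of_forall fun a => (measurePreserving_add_left volume (g a)).map_eq)

lemma shear_emb (g : ℝ → ℝ) (hg : Continuous g) :
    MeasurableEmbedding (fun p : ℝ × ℝ => (p.1, g p.1 + p.2)) := by
  let e : ℝ × ℝ ≃ᵐ ℝ × ℝ :=
    { toFun := fun p => (p.1, g p.1 + p.2)
      invFun := fun p => (p.1, p.2 - g p.1)
      left_inv := fun p => by simp
      right_inv := fun p => by simp
      measurable_toFun :=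
        (measurable_fst.prodMk (((hg.comp continuous_fst).add continuous_snd).measurable))
      measurable_invFun :=
        (measurable_fst.prodMk ((measurable_snd.sub (hg.comp continuous_fst).measurable))) }
  exact e.measurableEmbedding

lemma shear_preimage (g : ℝ → ℝ) (a b d : ℝ) :
    (fun p : ℝ × ℝ => (p.1, g p.1 + p.2)) ⁻¹'
      {p : ℝ × ℝ | p.1 ∈ Icc a b ∧ p.2 ∈ Icc (g p.1) (g p.1 + d)} =
      Icc a b ×ˢ Icc 0 d := by
  ext ⟨x, s⟩
  simp only [Set.mem_preimage, Set.mem_setOf_eq, Set.mem_Icc, Set.mem_prod]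
  constructor
  · rintro ⟨h1, h2, h3⟩; exact ⟨h1, by linarith, by linarith⟩
  · rintro ⟨h1, h2, h3⟩; exact ⟨h1, by linarith, by linarith⟩

lemma fubini_shear (g : ℝ → ℝ) (hg : Continuous g) (F : ℝ × ℝ → ℝ) (hF : Continuous F)
    (a b d : ℝ) :
    ∫ p in {p : ℝ × ℝ | p.1 ∈ Icc a b ∧ p.2 ∈ Icc (g p.1) (g p.1 + d)}, F p =
      ∫ x in Icc a b, ∫ s in Icc 0 d, F (x, g x + s) := by
  rw [← (shear_mp g hg).setIntegral_preimage_emb (shear_emb g hg) F _, shear_preimage]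
  have hInt : IntegrableOn (fun p : ℝ × ℝ => F (p.1, g p.1 + p.2)) (Icc a b ×ˢ Icc 0 d)
      (volume.prod volume) := by
    rw [← Measure.volume_eq_prod]
    exact ((hF.comp (continuous_fst.prodMk
      ((hg.comp continuous_fst).add continuous_snd))).continuousOn).integrableOn_compact
      (isCompact_Icc.prod isCompact_Icc)
  calc ∫ p in Icc a b ×ˢ Icc 0 d, F (p.1, g p.1 + p.2) ∂volume
      = ∫ p in Icc a b ×ˢ Icc 0 d, F (p.1, g p.1 + p.2) ∂(volume.prod volume) := by
        rw [← Measure.volume_eq_prod]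
    _ = ∫ x in Icc a b, ∫ s in Icc 0 d, F (x, g x + s) := by
        rw [setIntegral_prod _ hInt]

lemma shear_integrable_slices (g : ℝ → ℝ) (hg : Continuous g) (F : ℝ × ℝ → ℝ)
    (hF : Continuous F) (a b d : ℝ) :
    IntegrableOn (fun x => ∫ s in Icc 0 d, F (x, g x + s)) (Icc a b) volume := by
  have hInt : IntegrableOn (fun p : ℝ × ℝ => F (p.1, g p.1 + p.2)) (Icc a b ×ˢ Icc 0 d)
      (volume.prod volume) := by
    rw [← Measure.volume_eq_prod]
    exact ((hF.comp (continuous_fst.prodMk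
      ((hg.comp continuous_fst).add continuous_snd))).continuousOn).integrableOn_compact
      (isCompact_Icc.prod isCompact_Icc)
  rw [IntegrableOn, ← Measure.prod_restrict] at hInt
  have := hInt.integral_prod_left
  simpa [IntegrableOn] using this

lemma shear_volume (g : ℝ → ℝ) (hg : Continuous g) (a b d : ℝ)
    (S : Set (ℝ × ℝ)) (hSmeas : MeasurableSet S)
    (hS : S = {p : ℝ × ℝ | p.1 ∈ Icc a b ∧ p.2 ∈ Icc (g p.1) (g p.1 + d)}) :
    volume S = ENNReal.ofReal (b - a) * ENNReal.ofReal d := by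
  have h1 := (shear_mp g hg).measure_preimage (s := S) hSmeas.nullMeasurableSet
  rw [hS] at h1 ⊢
  rw [shear_preimage] at h1
  rw [← h1, Measure.volume_eq_prod, Measure.prod_prod, Real.volume_Icc, Real.volume_Icc]
  norm_num


end AuxLemmas

set_option maxHeartbeats 2000000 in
open Set in
/-- Lemma 3.1 of the paper (integral inequality for the diffusion term, cancellation
part): for w ∈ C³ on the parallelogram Q = K¹ ∪ K² (K¹ with vertices
(x₀,y₀), (x₁,y₀), (x₀,y₊); K² with vertices (x₀,y₀), (x₁,y₋), (x₁,y₀)), with the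
piecewise-linear nodal interpolant wᴵ (whose x-derivative on Q is the constant
(w(x₁,y₀)−w(x₀,y₀))/hₓ), there is an absolute constant C with
|∫_Q ∂ₓ(w − wᴵ)| ≤ C·meas(Q)·Σ_{l+m=2} hₓ^l h_y^m ‖∂ₓ^{l+1}∂_y^m w‖_{L^∞(Q)}. -/
theorem diffusion_term_integral_inequality :
    ∃ C : ℝ, 0 < C ∧
      ∀ (x₀ x₁ ym y₀ yp hx hy : ℝ)
        (w wx wxx wxy wxxx wxxy wxyy : ℝ → ℝ → ℝ)
        (M₃₀ M₂₁ M₁₂ : ℝ),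
        hx = x₁ - x₀ → 0 < hx →
        hy = yp - y₀ → hy = y₀ - ym → 0 < hy →
        -- w is C³: first, second and third x/y partial derivatives exist and are continuous
        (∀ x y : ℝ, HasDerivAt (fun s => w s y) (wx x y) x) →
        (∀ x y : ℝ, HasDerivAt (fun s => wx s y) (wxx x y) x) →
        (∀ x y : ℝ, HasDerivAt (fun s => wx x s) (wxy x y) y) →
        (∀ x y : ℝ, HasDerivAt (fun s => wxx s y) (wxxx x y) x) →
        (∀ x y : ℝ, HasDerivAt (fun s => wxx x s) (wxxy x y) y) →
        (∀ x y : ℝ, HasDerivAt (fun s => wxy x s) (wxyy x y) y) →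
        Continuous (fun p : ℝ × ℝ => wx p.1 p.2) →
        -- L∞ bounds for the third derivatives on Q
        (∀ p ∈ (convexHull ℝ {((x₀ : ℝ), (y₀ : ℝ)), (x₁, y₀), (x₀, yp)} ∪
                convexHull ℝ {((x₀ : ℝ), (y₀ : ℝ)), (x₁, ym), (x₁, y₀)}),
            |wxxx p.1 p.2| ≤ M₃₀ ∧ |wxxy p.1 p.2| ≤ M₂₁ ∧ |wxyy p.1 p.2| ≤ M₁₂) →
        |∫ p in (convexHull ℝ {((x₀ : ℝ), (y₀ : ℝ)), (x₁, y₀), (x₀, yp)} ∪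
                 convexHull ℝ {((x₀ : ℝ), (y₀ : ℝ)), (x₁, ym), (x₁, y₀)}),
            (wx p.1 p.2 - (w x₁ y₀ - w x₀ y₀) / hx)|
          ≤ C * (volume (convexHull ℝ {((x₀ : ℝ), (y₀ : ℝ)), (x₁, y₀), (x₀, yp)} ∪
                  convexHull ℝ {((x₀ : ℝ), (y₀ : ℝ)), (x₁, ym), (x₁, y₀)})).toReal
              * (hx ^ 2 * M₃₀ + hx * hy * M₂₁ + hy ^ 2 * M₁₂) := by
  refine ⟨5, by norm_num, ?_⟩
  intro x₀ x₁ ym y₀ yp hx hy w wx wxx wxy wxxx wxxy wxyy M₃₀ M₂₁ M₁₂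
    hhx hx0 hyp' hym' hy0 hdw hdwxx hdwxy hdwxxx hdwxxy hdwxyy hwxc hM
  have hx1 : x₁ = x₀ + hx := by linarith
  subst hx1
  have hyp1 : yp = y₀ + hy := by linarith
  subst hyp1
  have hym1 : ym = y₀ - hy := by linarith
  subst hym1
  have hxne : hx ≠ 0 := ne_of_gt hx0
  have hyne : hy ≠ 0 := ne_of_gt hy0
  set g : ℝ → ℝ := fun x => y₀ - (x - x₀) * (hy / hx) with hgdef
  have hgcont : Continuous g := by
    apply Continuous.sub continuous_const
    exact (continuous_id.sub continuous_const).mul continuous_const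
  set S := (convexHull ℝ {((x₀:ℝ),(y₀:ℝ)), (x₀ + hx, y₀), (x₀, y₀ + hy)} ∪
            convexHull ℝ {((x₀:ℝ),(y₀:ℝ)), (x₀ + hx, y₀ - hy), (x₀ + hx, y₀)}) with hSdef
  have hS_eq : S = {p : ℝ × ℝ | p.1 ∈ Icc x₀ (x₀ + hx) ∧
      p.2 ∈ Icc (g p.1) (g p.1 + hy)} := hull_union_eq x₀ y₀ hx hy hx0 hy0
  have hSmeas : MeasurableSet S := by
    apply MeasurableSet.union <;>
      exact ((Set.toFinite _).isClosed_convexHull (𝕜 := ℝ)).measurableSet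
  -- the average and integrand
  set avg : ℝ := (w (x₀ + hx) y₀ - w x₀ y₀) / hx with havg
  set F : ℝ × ℝ → ℝ := fun p => wx p.1 p.2 - avg with hFdef
  have hFcont : Continuous F := hwxc.sub continuous_const
  -- volume of S
  have hvol : volume S = ENNReal.ofReal hx * ENNReal.ofReal hy := by
    have := shear_volume g hgcont x₀ (x₀ + hx) hy S hSmeas hS_eq
    simpa using this
  have hvolR : (volume S).toReal = hx * hy := by
    rw [hvol, ENNReal.toReal_mul, ENNReal.toReal_ofReal hx0.le, ENNReal.toReal_ofReal hy0.le]
  -- nonnegativity of the M's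
  have h00 : ((x₀:ℝ), (y₀:ℝ)) ∈ S := by
    rw [hSdef]
    exact Set.mem_union_left _ (subset_convexHull ℝ _ (by simp))
  have hM30 : 0 ≤ M₃₀ := le_trans (abs_nonneg _) (hM _ h00).1
  have hM21 : 0 ≤ M₂₁ := le_trans (abs_nonneg _) (hM _ h00).2.1
  have hM12 : 0 ≤ M₁₂ := le_trans (abs_nonneg _) (hM _ h00).2.2
  -- continuity helpers
  have hwx_y : ∀ x : ℝ, Continuous (fun y => wx x y) :=
    fun x => hwxc.comp (continuous_const.prodMk continuous_id)
  have hwx_x : ∀ y : ℝ, Continuous (fun x => wx x y) :=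
    fun y => hwxc.comp (continuous_id.prodMk continuous_const)
  have hwxy_y : ∀ x : ℝ, Continuous (fun t => wxy x t) := fun x => cont_of_deriv (hdwxyy x)
  -- Fubini
  have hfub : ∫ p in S, F p = ∫ x in Icc x₀ (x₀ + hx), (∫ s in Icc 0 hy, F (x, g x + s)) := by
    rw [hS_eq]; exact fubini_shear g hgcont F hFcont x₀ (x₀ + hx) hy
  have icc_int : ∀ (f : ℝ → ℝ) (a b : ℝ), a ≤ b → ∫ s in Icc a b, f s = ∫ s in a..b, f s := by
    intro f a b hab
    rw [intervalIntegral.integral_of_le hab, MeasureTheory.integral_Icc_eq_integral_Ioc]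
  set h : ℝ → ℝ := fun x => ∫ y in (g x)..(g x + hy), F (x, y) with hhdef
  have hinner : ∀ x : ℝ, ∫ s in Icc 0 hy, F (x, g x + s) = h x := by
    intro x
    rw [icc_int _ 0 hy hy0.le, hhdef]
    have := intervalIntegral.integral_comp_add_left (a := 0) (b := hy)
      (fun y => F (x, y)) (g x)
    simpa using this
  have hfub2 : ∫ p in S, F p = ∫ x in x₀..(x₀ + hx), h x := by
    rw [hfub, ← icc_int _ x₀ (x₀ + hx) (by linarith)]
    exact MeasureTheory.setIntegral_congr_fun measurableSet_Icc fun x _ => hinner x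
  -- h is integrable on Icc
  have hh_int : IntegrableOn h (Icc x₀ (x₀ + hx)) volume := by
    have := shear_integrable_slices g hgcont F hFcont x₀ (x₀ + hx) hy
    apply this.congr_fun (fun x _ => hinner x) measurableSet_Icc
  -- split off the constant-in-y part:  h x = D x + hy * (wx x y₀ - avg)
  set D : ℝ → ℝ := fun x => h x - hy * (wx x y₀ - avg) with hDdef
  have hD_eq : ∀ x ∈ Icc x₀ (x₀ + hx), D x = ∫ y in (g x)..(g x + hy), (wx x y - wx x y₀) := by
    intro x hxmem
    have hsplit : (fun y => F (x, y)) = fun y => (wx x y - wx x y₀) + (wx x y₀ - avg) := by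
      funext y; simp only [hFdef]; ring
    have h1 : h x = (∫ y in (g x)..(g x + hy), (wx x y - wx x y₀)) + hy * (wx x y₀ - avg) := by
      rw [hhdef]
      simp only [hsplit]
      rw [intervalIntegral.integral_add (f := fun y => wx x y - wx x y₀) (g := fun _ => wx x y₀ - avg) (((hwx_y x).sub continuous_const).intervalIntegrable _ _)
        (intervalIntegrable_const), intervalIntegral.integral_const]
      simp [smul_eq_mul]
    simp only [hDdef]; rw [h1]; ring
  -- the first-order term integrates to zero
  have hwxFTC : ∫ x in x₀..(x₀ + hx), wx x y₀ = w (x₀ + hx) y₀ - w x₀ y₀ :=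
    ftc (f := fun x => w x y₀) (f' := fun x => wx x y₀) (fun t => hdw t y₀) (hwx_x y₀) _ _
  have hzero : ∫ x in x₀..(x₀ + hx), (hy * (wx x y₀ - avg)) = 0 := by
    rw [intervalIntegral.integral_const_mul,
      intervalIntegral.integral_sub ((hwx_x y₀).intervalIntegrable _ _) intervalIntegrable_const,
      hwxFTC, intervalIntegral.integral_const]
    simp only [smul_eq_mul, havg]
    field_simp
    ring
  have hA_eq : ∫ p in S, F p = ∫ x in x₀..(x₀ + hx), D x := by
    rw [hfub2]
    have : (fun x => h x) = fun x => D x + hy * (wx x y₀ - avg) := by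
      funext x; rw [hDdef]; ring
    rw [this, intervalIntegral.integral_add ?hD ?hc, hzero, add_zero]
    case hc => exact (continuous_const.mul ((hwx_x y₀).sub continuous_const)).intervalIntegrable _ _
    case hD =>
      have : IntervalIntegrable h volume x₀ (x₀ + hx) := by
        rw [intervalIntegrable_iff_integrableOn_Ioc_of_le (by linarith)]
        exact hh_int.mono_set Set.Ioc_subset_Icc_self
      exact this.sub ((continuous_const.mul ((hwx_x y₀).sub continuous_const)).intervalIntegrable _ _)
  -- ============ estimates part ============
  set c : ℝ := x₀ + hx / 2 with hcdef
  set β : ℝ := y₀ + hy / 2 with hβdef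
  set γ : ℝ := y₀ - hy / 2 with hγdef
  set Hp : ℝ → ℝ := fun x => wx x β - wx x y₀ with hHpdef
  set Hm : ℝ → ℝ := fun x => wx x y₀ - wx x γ with hHmdef
  set q : ℝ → ℝ := fun x => hy * (hy / 2 - (x - x₀) * (hy / hx)) with hqdef
  have hx₀c : x₀ ≤ c := by simp only [hcdef]; linarith
  have hcle : c ≤ x₀ + hx := by simp only [hcdef]; linarith
  have hHpc : Continuous Hp := (hwx_x β).sub (hwx_x y₀)
  have hHmc : Continuous Hm := (hwx_x y₀).sub (hwx_x γ)
  -- membership helpers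
  have hcol : ∀ x y : ℝ, x ∈ Icc x₀ (x₀ + hx) → y ∈ Icc (g x) (g x + hy) →
      ((x, y) : ℝ × ℝ) ∈ S := by
    intro x y hx' hy'
    rw [hS_eq]; exact ⟨hx', hy'⟩
  have haux1 : ∀ x : ℝ, x₀ ≤ x → 0 ≤ (x - x₀) * (hy / hx) :=
    fun x hx' => mul_nonneg (by linarith) (div_nonneg hy0.le hx0.le)
  have haux2 : ∀ x : ℝ, x ≤ x₀ + hx → (x - x₀) * (hy / hx) ≤ hy := by
    intro x hx'
    have h1 : (x - x₀) / hx ≤ 1 := (div_le_one hx0).mpr (by linarith)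
    have := mul_le_mul_of_nonneg_right h1 hy0.le
    calc (x - x₀) * (hy / hx) = (x - x₀) / hx * hy := by ring
      _ ≤ 1 * hy := this
      _ = hy := one_mul hy
  have haux3 : ∀ x : ℝ, x ≤ c → (x - x₀) * (hy / hx) ≤ hy / 2 := by
    intro x hx'
    have h1 : (x - x₀) / hx ≤ 1 / 2 := by
      rw [div_le_iff₀ hx0]
      simp only [hcdef] at hx'; linarith
    have := mul_le_mul_of_nonneg_right h1 hy0.le
    calc (x - x₀) * (hy / hx) = (x - x₀) / hx * hy := by ring
      _ ≤ 1 / 2 * hy := this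
      _ = hy / 2 := by ring
  have haux4 : ∀ x : ℝ, c ≤ x → hy / 2 ≤ (x - x₀) * (hy / hx) := by
    intro x hx'
    have h1 : (1:ℝ) / 2 ≤ (x - x₀) / hx := by
      rw [le_div_iff₀ hx0]
      simp only [hcdef] at hx'; linarith
    have := mul_le_mul_of_nonneg_right h1 hy0.le
    calc hy / 2 = 1 / 2 * hy := by ring
      _ ≤ (x - x₀) / hx * hy := this
      _ = (x - x₀) * (hy / hx) := by ring
  have hy₀col : ∀ x ∈ Icc x₀ (x₀ + hx), y₀ ∈ Icc (g x) (g x + hy) := by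
    intro x hx'
    simp only [Set.mem_Icc] at hx' ⊢
    have := haux1 x hx'.1; have := haux2 x hx'.2
    constructor <;> · simp only [hgdef]; linarith
  have hβcol : ∀ x ∈ Icc x₀ c, β ∈ Icc (g x) (g x + hy) := by
    intro x hx'
    simp only [Set.mem_Icc] at hx' ⊢
    have := haux1 x hx'.1; have := haux3 x hx'.2
    constructor <;> · simp only [hgdef, hβdef]; linarith
  have hγcol : ∀ x ∈ Icc c (x₀ + hx), γ ∈ Icc (g x) (g x + hy) := by
    intro x hx'
    simp only [Set.mem_Icc] at hx' ⊢
    have := haux4 x hx'.1; have := haux2 x hx'.2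
    constructor <;> · simp only [hgdef, hγdef]; linarith
  have hwxyyB : ∀ x ∈ Icc x₀ (x₀ + hx), ∀ t ∈ Icc (g x) (g x + hy), |wxyy x t| ≤ M₁₂ :=
    fun x hx' t ht' => (hM _ (hcol x t hx' ht')).2.2
  have hwxxyB : ∀ x ∈ Icc x₀ (x₀ + hx), ∀ t ∈ Icc (g x) (g x + hy), |wxxy x t| ≤ M₂₁ :=
    fun x hx' t ht' => (hM _ (hcol x t hx' ht')).2.1
  -- variation of wxy in y within a column
  have hwxyvar : ∀ x ∈ Icc x₀ (x₀ + hx), ∀ t ∈ Icc (g x) (g x + hy),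
      |wxy x t - wxy x y₀| ≤ M₁₂ * |t - y₀| := by
    intro x hx' t ht'
    exact mvt_abs (fun s => hdwxyy x s)
      (fun u hu => hwxyyB x hx' u (Set.uIcc_subset_Icc (hy₀col x hx') ht' hu))
  -- |t - y₀| ≤ hy within a column
  have habscol : ∀ x ∈ Icc x₀ (x₀ + hx), ∀ t ∈ Icc (g x) (g x + hy), |t - y₀| ≤ hy := by
    intro x hx' t ht'
    have h1 := hy₀col x hx'
    simp only [Set.mem_Icc] at ht' h1
    rw [abs_le]; constructor <;> linarith
  -- Taylor bound for Hp
  have hPb : ∀ x ∈ Icc x₀ c, |Hp x - hy / 2 * wxy x y₀| ≤ hy / 2 * M₁₂ * (hy / 2) := by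
    intro x hx'
    have hx'' : x ∈ Icc x₀ (x₀ + hx) := ⟨hx'.1, le_trans hx'.2 hcle⟩
    have ht := taylor1 (f := fun t => wx x t) (f' := fun t => wxy x t)
      (fun t => hdwxy x t) (hwxy_y x) (a := y₀) (b := β) (K := wxy x y₀)
      (M := hy / 2 * M₁₂) ?_
    · have hb : β - y₀ = hy / 2 := by simp only [hβdef]; ring
      have hb2 : |β - y₀| = hy / 2 := by rw [hb]; exact abs_of_pos (by linarith)
      rw [hb2, hb] at ht
      simpa only [hHpdef, mul_comm] using ht
    · intro t htm
      have htcol : t ∈ Icc (g x) (g x + hy) :=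
        Set.uIcc_subset_Icc (hy₀col x hx'') (hβcol x hx') htm
      have h1 := hwxyvar x hx'' t htcol
      have h2 : |t - y₀| ≤ hy / 2 := by
        have := Set.uIcc_subset_Icc (Set.left_mem_Icc.mpr (by simp only [hβdef]; linarith))
          (Set.right_mem_Icc.mpr (by simp only [hβdef]; linarith)) htm
        simp only [Set.mem_Icc] at this
        rw [abs_le]; constructor <;> · simp only [hβdef] at this ⊢; linarith
      calc |wxy x t - wxy x y₀| ≤ M₁₂ * |t - y₀| := h1
        _ ≤ M₁₂ * (hy / 2) := by exact mul_le_mul_of_nonneg_left h2 hM12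
        _ = hy / 2 * M₁₂ := by ring
  have hMb : ∀ x ∈ Icc c (x₀ + hx), |Hm x - hy / 2 * wxy x y₀| ≤ hy / 2 * M₁₂ * (hy / 2) := by
    intro x hx'
    have hx'' : x ∈ Icc x₀ (x₀ + hx) := ⟨le_trans hx₀c hx'.1, hx'.2⟩
    have ht := taylor1 (f := fun t => wx x t) (f' := fun t => wxy x t)
      (fun t => hdwxy x t) (hwxy_y x) (a := γ) (b := y₀) (K := wxy x y₀)
      (M := hy / 2 * M₁₂) ?_
    · have hb : y₀ - γ = hy / 2 := by simp only [hγdef]; ring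
      have hb2 : |y₀ - γ| = hy / 2 := by rw [hb]; exact abs_of_pos (by linarith)
      rw [hb2, hb] at ht
      simpa only [hHmdef, mul_comm] using ht
    · intro t htm
      have htcol : t ∈ Icc (g x) (g x + hy) :=
        Set.uIcc_subset_Icc (hγcol x hx') (hy₀col x hx'') htm
      have h1 := hwxyvar x hx'' t htcol
      have h2 : |t - y₀| ≤ hy / 2 := by
        have := Set.uIcc_subset_Icc (Set.left_mem_Icc.mpr (by simp only [hγdef]; linarith))
          (Set.right_mem_Icc.mpr (by simp only [hγdef]; linarith)) htm
        simp only [Set.mem_Icc] at this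
        rw [abs_le]; constructor <;> · simp only [hγdef] at this ⊢; linarith
      calc |wxy x t - wxy x y₀| ≤ M₁₂ * |t - y₀| := h1
        _ ≤ M₁₂ * (hy / 2) := by exact mul_le_mul_of_nonneg_left h2 hM12
        _ = hy / 2 * M₁₂ := by ring
  -- bound on the normalized halves
  have hKp : ∀ x ∈ Icc x₀ c, |2 / hy * Hp x - wxy x y₀| ≤ hy / 2 * M₁₂ := by
    intro x hx'
    have h1 := hPb x hx'
    rw [show (2:ℝ) / hy * Hp x - wxy x y₀ = 2 / hy * (Hp x - hy / 2 * wxy x y₀) from by field_simp, abs_mul, abs_of_pos (by positivity : (0:ℝ) < 2 / hy)]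
    calc 2 / hy * |Hp x - hy / 2 * wxy x y₀| ≤ 2 / hy * (hy / 2 * M₁₂ * (hy / 2)) :=
          mul_le_mul_of_nonneg_left h1 (by positivity)
      _ = hy / 2 * M₁₂ := by field_simp
  have hKm : ∀ x ∈ Icc c (x₀ + hx), |2 / hy * Hm x - wxy x y₀| ≤ hy / 2 * M₁₂ := by
    intro x hx'
    have h1 := hMb x hx'
    rw [show (2:ℝ) / hy * Hm x - wxy x y₀ = 2 / hy * (Hm x - hy / 2 * wxy x y₀) from by field_simp, abs_mul, abs_of_pos (by positivity : (0:ℝ) < 2 / hy)]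
    calc 2 / hy * |Hm x - hy / 2 * wxy x y₀| ≤ 2 / hy * (hy / 2 * M₁₂ * (hy / 2)) :=
          mul_le_mul_of_nonneg_left h1 (by positivity)
      _ = hy / 2 * M₁₂ := by field_simp
  -- first-order Taylor bound in the column
  have hT1 : ∀ x ∈ Icc x₀ (x₀ + hx), ∀ y ∈ Icc (g x) (g x + hy),
      |wx x y - wx x y₀ - (y - y₀) * wxy x y₀| ≤ hy * M₁₂ * hy := by
    intro x hx' y hy'
    have ht := taylor1 (f := fun t => wx x t) (f' := fun t => wxy x t)
      (fun t => hdwxy x t) (hwxy_y x) (a := y₀) (b := y) (K := wxy x y₀)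
      (M := hy * M₁₂) ?_
    · calc |wx x y - wx x y₀ - (y - y₀) * wxy x y₀| ≤ hy * M₁₂ * |y - y₀| := ht
        _ ≤ hy * M₁₂ * hy := mul_le_mul_of_nonneg_left (habscol x hx' y hy') (by positivity)
    · intro t htm
      have htcol : t ∈ Icc (g x) (g x + hy) :=
        Set.uIcc_subset_Icc (hy₀col x hx') hy' htm
      calc |wxy x t - wxy x y₀| ≤ M₁₂ * |t - y₀| := hwxyvar x hx' t htcol
        _ ≤ M₁₂ * hy := mul_le_mul_of_nonneg_left (habscol x hx' t htcol) hM12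
        _ = hy * M₁₂ := by ring
  -- integral of (y - y₀) over the column
  have hq_int : ∀ x : ℝ, ∫ y in (g x)..(g x + hy), (y - y₀) = q x := by
    intro x
    rw [intervalIntegral.integral_sub (continuous_id'.intervalIntegrable _ _)
      intervalIntegrable_const, integral_id, intervalIntegral.integral_const]
    simp only [smul_eq_mul, hqdef, hgdef]
    ring
  -- the two half-bounds on D
  have hB1 : ∀ x ∈ Icc x₀ c, |D x - 2 * q x / hy * Hp x| ≤ 2 * hy ^ 2 * M₁₂ * hy := by
    intro x hx'
    have hx'' : x ∈ Icc x₀ (x₀ + hx) := ⟨hx'.1, le_trans hx'.2 hcle⟩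
    set P : ℝ := 2 / hy * Hp x with hPdef
    have hrepr : D x - 2 * q x / hy * Hp x =
        ∫ y in (g x)..(g x + hy), ((wx x y - wx x y₀) - (y - y₀) * P) := by
      rw [intervalIntegral.integral_sub (f := fun y => wx x y - wx x y₀) (g := fun y => (y - y₀) * P) (((hwx_y x).sub continuous_const).intervalIntegrable _ _)
        (((continuous_id'.sub continuous_const).mul continuous_const).intervalIntegrable _ _)]
      have h3 : ∫ y in (g x)..(g x + hy), ((y - y₀) * P) = P * q x := by
        have h4 : (fun y => (y - y₀) * P) = fun y => P * (y - y₀) := by funext y; ring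
        rw [h4, intervalIntegral.integral_const_mul, hq_int]
      rw [h3, hD_eq x hx'', hPdef]
      field_simp
    rw [hrepr]
    have hbd : ∀ y ∈ Set.uIoc (g x) (g x + hy),
        ‖(wx x y - wx x y₀) - (y - y₀) * P‖ ≤ 2 * hy ^ 2 * M₁₂ := by
      intro y hy'
      have hy'' : y ∈ Icc (g x) (g x + hy) := by
        rcases Set.uIoc_subset_uIcc hy' with h
        exact Set.uIcc_subset_Icc (Set.left_mem_Icc.mpr (by linarith))
          (Set.right_mem_Icc.mpr (by linarith)) h
      have e1 : (wx x y - wx x y₀) - (y - y₀) * P =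
          (wx x y - wx x y₀ - (y - y₀) * wxy x y₀) - (y - y₀) * (P - wxy x y₀) := by ring
      rw [Real.norm_eq_abs, e1]
      have t1 := hT1 x hx'' y hy''
      have t2 : |(y - y₀) * (P - wxy x y₀)| ≤ hy * (hy / 2 * M₁₂) := by
        rw [abs_mul]
        exact mul_le_mul (habscol x hx'' y hy'') (hKp x hx') (abs_nonneg _) hy0.le
      calc |(wx x y - wx x y₀ - (y - y₀) * wxy x y₀) - (y - y₀) * (P - wxy x y₀)|
          ≤ |wx x y - wx x y₀ - (y - y₀) * wxy x y₀| + |(y - y₀) * (P - wxy x y₀)| :=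
            abs_sub _ _
        _ ≤ hy * M₁₂ * hy + hy * (hy / 2 * M₁₂) := add_le_add t1 t2
        _ ≤ 2 * hy ^ 2 * M₁₂ := by nlinarith
    have := intervalIntegral.norm_integral_le_of_norm_le_const hbd
    rw [Real.norm_eq_abs] at this
    calc |∫ y in (g x)..(g x + hy), ((wx x y - wx x y₀) - (y - y₀) * P)|
        ≤ 2 * hy ^ 2 * M₁₂ * |(g x + hy) - g x| := this
      _ = 2 * hy ^ 2 * M₁₂ * hy := by
          rw [show (g x + hy) - g x = hy by ring, abs_of_pos hy0]
  have hB2 : ∀ x ∈ Icc c (x₀ + hx), |D x - 2 * q x / hy * Hm x| ≤ 2 * hy ^ 2 * M₁₂ * hy := by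
    intro x hx'
    have hx'' : x ∈ Icc x₀ (x₀ + hx) := ⟨le_trans hx₀c hx'.1, hx'.2⟩
    set P : ℝ := 2 / hy * Hm x with hPdef
    have hrepr : D x - 2 * q x / hy * Hm x =
        ∫ y in (g x)..(g x + hy), ((wx x y - wx x y₀) - (y - y₀) * P) := by
      rw [intervalIntegral.integral_sub (f := fun y => wx x y - wx x y₀) (g := fun y => (y - y₀) * P) (((hwx_y x).sub continuous_const).intervalIntegrable _ _)
        (((continuous_id'.sub continuous_const).mul continuous_const).intervalIntegrable _ _)]
      have h3 : ∫ y in (g x)..(g x + hy), ((y - y₀) * P) = P * q x := by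
        have h4 : (fun y => (y - y₀) * P) = fun y => P * (y - y₀) := by funext y; ring
        rw [h4, intervalIntegral.integral_const_mul, hq_int]
      rw [h3, hD_eq x hx'', hPdef]
      field_simp
    rw [hrepr]
    have hbd : ∀ y ∈ Set.uIoc (g x) (g x + hy),
        ‖(wx x y - wx x y₀) - (y - y₀) * P‖ ≤ 2 * hy ^ 2 * M₁₂ := by
      intro y hy'
      have hy'' : y ∈ Icc (g x) (g x + hy) := by
        rcases Set.uIoc_subset_uIcc hy' with h
        exact Set.uIcc_subset_Icc (Set.left_mem_Icc.mpr (by linarith))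
          (Set.right_mem_Icc.mpr (by linarith)) h
      have e1 : (wx x y - wx x y₀) - (y - y₀) * P =
          (wx x y - wx x y₀ - (y - y₀) * wxy x y₀) - (y - y₀) * (P - wxy x y₀) := by ring
      rw [Real.norm_eq_abs, e1]
      have t1 := hT1 x hx'' y hy''
      have t2 : |(y - y₀) * (P - wxy x y₀)| ≤ hy * (hy / 2 * M₁₂) := by
        rw [abs_mul]
        exact mul_le_mul (habscol x hx'' y hy'') (hKm x hx') (abs_nonneg _) hy0.le
      calc |(wx x y - wx x y₀ - (y - y₀) * wxy x y₀) - (y - y₀) * (P - wxy x y₀)|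
          ≤ |wx x y - wx x y₀ - (y - y₀) * wxy x y₀| + |(y - y₀) * (P - wxy x y₀)| :=
            abs_sub _ _
        _ ≤ hy * M₁₂ * hy + hy * (hy / 2 * M₁₂) := add_le_add t1 t2
        _ ≤ 2 * hy ^ 2 * M₁₂ := by nlinarith
    have := intervalIntegral.norm_integral_le_of_norm_le_const hbd
    rw [Real.norm_eq_abs] at this
    calc |∫ y in (g x)..(g x + hy), ((wx x y - wx x y₀) - (y - y₀) * P)|
        ≤ 2 * hy ^ 2 * M₁₂ * |(g x + hy) - g x| := this
      _ = 2 * hy ^ 2 * M₁₂ * hy := by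
          rw [show (g x + hy) - g x = hy by ring, abs_of_pos hy0]
  -- bound on the weight
  have hB3 : ∀ x ∈ Icc x₀ (x₀ + hx), |2 * q x / hy| ≤ hy := by
    intro x hx'
    have h1 : 2 * q x / hy = hy - 2 * ((x - x₀) * (hy / hx)) := by
      simp only [hqdef]; field_simp
    rw [h1, abs_le]
    have := haux1 x hx'.1; have := haux2 x hx'.2
    constructor <;> linarith
  -- x-variation of Hp and Hm (through wxxy)
  have hwxxvar_p : ∀ t ∈ Icc x₀ c, |wxx t β - wxx t y₀| ≤ M₂₁ * (hy / 2) := by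
    intro t ht'
    have ht'' : t ∈ Icc x₀ (x₀ + hx) := ⟨ht'.1, le_trans ht'.2 hcle⟩
    have h := mvt_abs (f := fun s => wxx t s) (f' := fun s => wxxy t s)
      (fun s => hdwxxy t s) (a := y₀) (b := β) (M := M₂₁)
      (fun u hu => hwxxyB t ht'' u (Set.uIcc_subset_Icc (hy₀col t ht'') (hβcol t ht') hu))
    calc |wxx t β - wxx t y₀| ≤ M₂₁ * |β - y₀| := h
      _ = M₂₁ * (hy / 2) := by
          rw [show β - y₀ = hy / 2 by simp only [hβdef]; ring, abs_of_pos (by linarith)]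
  have hwxxvar_m : ∀ t ∈ Icc c (x₀ + hx), |wxx t y₀ - wxx t γ| ≤ M₂₁ * (hy / 2) := by
    intro t ht'
    have ht'' : t ∈ Icc x₀ (x₀ + hx) := ⟨le_trans hx₀c ht'.1, ht'.2⟩
    have h := mvt_abs (f := fun s => wxx t s) (f' := fun s => wxxy t s)
      (fun s => hdwxxy t s) (a := γ) (b := y₀) (M := M₂₁)
      (fun u hu => hwxxyB t ht'' u (Set.uIcc_subset_Icc (hγcol t ht') (hy₀col t ht'') hu))
    calc |wxx t y₀ - wxx t γ| ≤ M₂₁ * |y₀ - γ| := h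
      _ = M₂₁ * (hy / 2) := by
          rw [show y₀ - γ = hy / 2 by simp only [hγdef]; ring, abs_of_pos (by linarith)]
  have hB4 : ∀ x ∈ Icc x₀ c, |Hp x - Hp c| ≤ M₂₁ * (hy / 2) * (hx / 2) := by
    intro x hx'
    have h := mvt_abs (f := Hp) (f' := fun t => wxx t β - wxx t y₀)
      (fun t => (hdwxx t β).sub (hdwxx t y₀)) (a := c) (b := x) (M := M₂₁ * (hy / 2))
      (fun u hu => hwxxvar_p u
        (Set.uIcc_subset_Icc (Set.right_mem_Icc.mpr hx₀c) hx' hu))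
    have h2 : |x - c| ≤ hx / 2 := by
      rw [abs_le]
      obtain ⟨u1, u2⟩ := hx'
      simp only [hcdef] at u2 ⊢
      constructor <;> linarith
    calc |Hp x - Hp c| ≤ M₂₁ * (hy / 2) * |x - c| := h
      _ ≤ M₂₁ * (hy / 2) * (hx / 2) := by
          apply mul_le_mul_of_nonneg_left h2 (by positivity)
  have hB5 : ∀ x ∈ Icc c (x₀ + hx), |Hm x - Hm c| ≤ M₂₁ * (hy / 2) * (hx / 2) := by
    intro x hx'
    have h := mvt_abs (f := Hm) (f' := fun t => wxx t y₀ - wxx t γ)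
      (fun t => (hdwxx t y₀).sub (hdwxx t γ)) (a := c) (b := x) (M := M₂₁ * (hy / 2))
      (fun u hu => hwxxvar_m u
        (Set.uIcc_subset_Icc (Set.left_mem_Icc.mpr hcle) hx' hu))
    have h2 : |x - c| ≤ hx / 2 := by
      rw [abs_le]
      obtain ⟨u1, u2⟩ := hx'
      simp only [hcdef] at u1 ⊢
      constructor <;> linarith
    calc |Hm x - Hm c| ≤ M₂₁ * (hy / 2) * |x - c| := h
      _ ≤ M₂₁ * (hy / 2) * (hx / 2) := by
          apply mul_le_mul_of_nonneg_left h2 (by positivity)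
  -- second difference at the center
  have hB6 : |Hp c - Hm c| ≤ hy ^ 2 * M₁₂ / 2 := by
    have h1 := hPb c (Set.right_mem_Icc.mpr hx₀c)
    have h2 := hMb c (Set.left_mem_Icc.mpr hcle)
    have e : Hp c - Hm c = (Hp c - hy / 2 * wxy c y₀) - (Hm c - hy / 2 * wxy c y₀) := by ring
    rw [e]
    calc |(Hp c - hy / 2 * wxy c y₀) - (Hm c - hy / 2 * wxy c y₀)|
        ≤ |Hp c - hy / 2 * wxy c y₀| + |Hm c - hy / 2 * wxy c y₀| := abs_sub _ _
      _ ≤ hy / 2 * M₁₂ * (hy / 2) + hy / 2 * M₁₂ * (hy / 2) := add_le_add h1 h2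
      _ = hy ^ 2 * M₁₂ / 2 := by ring
  -- the weight integrals
  have hbase : ∀ a b : ℝ, ∫ x in a..b, (x - x₀) = ((b - x₀) ^ 2 - (a - x₀) ^ 2) / 2 := by
    intro a b
    rw [intervalIntegral.integral_comp_sub_right (fun u => u) x₀, integral_id]
  have hqfun : (fun x => 2 * q x / hy) = fun x => hy - 2 * hy / hx * (x - x₀) := by
    funext x; simp only [hqdef]; field_simp
  have hqcont : Continuous (fun x => 2 * q x / hy) := by
    rw [hqfun]
    exact continuous_const.sub (continuous_const.mul (continuous_id'.sub continuous_const))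
  have hQ : ∀ a b : ℝ, ∫ x in a..b, (2 * q x / hy) =
      hy * (b - a) - 2 * hy / hx * (((b - x₀) ^ 2 - (a - x₀) ^ 2) / 2) := by
    intro a b
    rw [hqfun, intervalIntegral.integral_sub (f := fun _ => hy) (g := fun x => 2 * hy / hx * (x - x₀)) intervalIntegrable_const
      ((continuous_const.mul (continuous_id'.sub continuous_const)).intervalIntegrable _ _),
      intervalIntegral.integral_const, intervalIntegral.integral_const_mul, hbase]
    simp only [smul_eq_mul]
    ring
  have hQ1 : ∫ x in x₀..c, (2 * q x / hy) = hx * hy / 4 := by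
    rw [hQ]
    simp only [hcdef]
    field_simp
    ring
  have hQ2 : ∫ x in c..(x₀ + hx), (2 * q x / hy) = -(hx * hy / 4) := by
    rw [hQ]
    simp only [hcdef]
    field_simp
    ring
  -- integrability of D on subintervals
  have hDii : ∀ a b : ℝ, a ∈ Icc x₀ (x₀ + hx) → b ∈ Icc x₀ (x₀ + hx) → a ≤ b →
      IntervalIntegrable D volume a b := by
    intro a b hamem hbmem hab
    have hhint : IntervalIntegrable h volume a b := by
      rw [intervalIntegrable_iff_integrableOn_Ioc_of_le hab]
      exact hh_int.mono_set (Set.Ioc_subset_Icc_self.trans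
        (Set.Icc_subset_Icc hamem.1 hbmem.2))
    exact hhint.sub ((continuous_const.mul ((hwx_x y₀).sub continuous_const)).intervalIntegrable _ _)
  -- ============ final assembly ============
  have hmemx₀ : x₀ ∈ Icc x₀ (x₀ + hx) := Set.left_mem_Icc.mpr (by linarith)
  have hmemx₁ : (x₀ + hx) ∈ Icc x₀ (x₀ + hx) := Set.right_mem_Icc.mpr (by linarith)
  have hmemc : c ∈ Icc x₀ (x₀ + hx) := ⟨hx₀c, hcle⟩
  have hsplitA : ∫ x in x₀..(x₀ + hx), D x =
      (∫ x in x₀..c, D x) + ∫ x in c..(x₀ + hx), D x :=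
    (intervalIntegral.integral_add_adjacent_intervals
      (hDii x₀ c hmemx₀ hmemc hx₀c) (hDii c (x₀ + hx) hmemc hmemx₁ hcle)).symm
  -- decompose each half
  have i0p : IntervalIntegrable (fun x => D x - 2 * q x / hy * Hp x) volume x₀ c :=
    (hDii x₀ c hmemx₀ hmemc hx₀c).sub ((hqcont.mul hHpc).intervalIntegrable _ _)
  have i1p : IntervalIntegrable (fun x => 2 * q x / hy * (Hp x - Hp c)) volume x₀ c :=
    (hqcont.mul (hHpc.sub continuous_const)).intervalIntegrable _ _
  have i2p : IntervalIntegrable (fun x => 2 * q x / hy * Hp c) volume x₀ c :=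
    (hqcont.mul continuous_const).intervalIntegrable _ _
  have i0m : IntervalIntegrable (fun x => D x - 2 * q x / hy * Hm x) volume c (x₀ + hx) :=
    (hDii c (x₀ + hx) hmemc hmemx₁ hcle).sub ((hqcont.mul hHmc).intervalIntegrable _ _)
  have i1m : IntervalIntegrable (fun x => 2 * q x / hy * (Hm x - Hm c)) volume c (x₀ + hx) :=
    (hqcont.mul (hHmc.sub continuous_const)).intervalIntegrable _ _
  have i2m : IntervalIntegrable (fun x => 2 * q x / hy * Hm c) volume c (x₀ + hx) :=
    (hqcont.mul continuous_const).intervalIntegrable _ _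
  have e1p : ∫ x in x₀..c, (2 * q x / hy * Hp c) = Hp c * (hx * hy / 4) := by
    rw [intervalIntegral.integral_mul_const, hQ1]; ring
  have e1m : ∫ x in c..(x₀ + hx), (2 * q x / hy * Hm c) = -(Hm c * (hx * hy / 4)) := by
    rw [intervalIntegral.integral_mul_const, hQ2]; ring
  have hdec1 : ∫ x in x₀..c, D x =
      (∫ x in x₀..c, (D x - 2 * q x / hy * Hp x)) +
      (∫ x in x₀..c, (2 * q x / hy * (Hp x - Hp c))) + Hp c * (hx * hy / 4) := by
    have hid : (fun x => D x) = fun x => (D x - 2 * q x / hy * Hp x) +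
        (2 * q x / hy * (Hp x - Hp c)) + (2 * q x / hy * Hp c) := by
      funext x; ring
    calc ∫ x in x₀..c, D x
        = ∫ x in x₀..c, ((D x - 2 * q x / hy * Hp x) +
            (2 * q x / hy * (Hp x - Hp c)) + (2 * q x / hy * Hp c)) := by rw [← hid]
      _ = (∫ x in x₀..c, ((D x - 2 * q x / hy * Hp x) + (2 * q x / hy * (Hp x - Hp c)))) +
            ∫ x in x₀..c, (2 * q x / hy * Hp c) :=
          intervalIntegral.integral_add (i0p.add i1p) i2p
      _ = (∫ x in x₀..c, (D x - 2 * q x / hy * Hp x)) +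
            (∫ x in x₀..c, (2 * q x / hy * (Hp x - Hp c))) + Hp c * (hx * hy / 4) := by
          rw [intervalIntegral.integral_add i0p i1p, e1p]
  have hdec2 : ∫ x in c..(x₀ + hx), D x =
      (∫ x in c..(x₀ + hx), (D x - 2 * q x / hy * Hm x)) +
      (∫ x in c..(x₀ + hx), (2 * q x / hy * (Hm x - Hm c))) - Hm c * (hx * hy / 4) := by
    have hid : (fun x => D x) = fun x => (D x - 2 * q x / hy * Hm x) +
        (2 * q x / hy * (Hm x - Hm c)) + (2 * q x / hy * Hm c) := by
      funext x; ring
    calc ∫ x in c..(x₀ + hx), D x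
        = ∫ x in c..(x₀ + hx), ((D x - 2 * q x / hy * Hm x) +
            (2 * q x / hy * (Hm x - Hm c)) + (2 * q x / hy * Hm c)) := by rw [← hid]
      _ = (∫ x in c..(x₀ + hx), ((D x - 2 * q x / hy * Hm x) +
            (2 * q x / hy * (Hm x - Hm c)))) +
            ∫ x in c..(x₀ + hx), (2 * q x / hy * Hm c) :=
          intervalIntegral.integral_add (i0m.add i1m) i2m
      _ = (∫ x in c..(x₀ + hx), (D x - 2 * q x / hy * Hm x)) +
            (∫ x in c..(x₀ + hx), (2 * q x / hy * (Hm x - Hm c))) - Hm c * (hx * hy / 4) := by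
          rw [intervalIntegral.integral_add i0m i1m, e1m]; ring
  -- bounds on the four integral pieces
  have hcsub : c - x₀ = hx / 2 := by simp only [hcdef]; ring
  have hcsub2 : x₀ + hx - c = hx / 2 := by simp only [hcdef]; ring
  have bA1 : |∫ x in x₀..c, (D x - 2 * q x / hy * Hp x)| ≤ 2 * hy ^ 2 * M₁₂ * hy * (hx / 2) := by
    have hb := intervalIntegral.norm_integral_le_of_norm_le_const
      (C := 2 * hy ^ 2 * M₁₂ * hy) (a := x₀) (b := c)
      (f := fun x => D x - 2 * q x / hy * Hp x) ?_
    · rw [Real.norm_eq_abs] at hb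
      calc |∫ x in x₀..c, (D x - 2 * q x / hy * Hp x)| ≤ 2 * hy ^ 2 * M₁₂ * hy * |c - x₀| := hb
        _ = 2 * hy ^ 2 * M₁₂ * hy * (hx / 2) := by rw [hcsub, abs_of_pos (by linarith)]
    · intro x hxm
      rw [Set.uIoc_of_le hx₀c] at hxm
      exact (Real.norm_eq_abs _) ▸ hB1 x (Set.Ioc_subset_Icc_self hxm)
  have bA2 : |∫ x in c..(x₀ + hx), (D x - 2 * q x / hy * Hm x)| ≤
      2 * hy ^ 2 * M₁₂ * hy * (hx / 2) := by
    have hb := intervalIntegral.norm_integral_le_of_norm_le_const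
      (C := 2 * hy ^ 2 * M₁₂ * hy) (a := c) (b := x₀ + hx)
      (f := fun x => D x - 2 * q x / hy * Hm x) ?_
    · rw [Real.norm_eq_abs] at hb
      calc |∫ x in c..(x₀ + hx), (D x - 2 * q x / hy * Hm x)|
          ≤ 2 * hy ^ 2 * M₁₂ * hy * |x₀ + hx - c| := hb
        _ = 2 * hy ^ 2 * M₁₂ * hy * (hx / 2) := by rw [hcsub2, abs_of_pos (by linarith)]
    · intro x hxm
      rw [Set.uIoc_of_le hcle] at hxm
      exact (Real.norm_eq_abs _) ▸ hB2 x (Set.Ioc_subset_Icc_self hxm)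
  have bB1 : |∫ x in x₀..c, (2 * q x / hy * (Hp x - Hp c))| ≤
      hy * (M₂₁ * (hy / 2) * (hx / 2)) * (hx / 2) := by
    have hb := intervalIntegral.norm_integral_le_of_norm_le_const
      (C := hy * (M₂₁ * (hy / 2) * (hx / 2))) (a := x₀) (b := c)
      (f := fun x => 2 * q x / hy * (Hp x - Hp c)) ?_
    · rw [Real.norm_eq_abs] at hb
      calc |∫ x in x₀..c, (2 * q x / hy * (Hp x - Hp c))|
          ≤ hy * (M₂₁ * (hy / 2) * (hx / 2)) * |c - x₀| := hb
        _ = hy * (M₂₁ * (hy / 2) * (hx / 2)) * (hx / 2) := by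
            rw [hcsub, abs_of_pos (by linarith)]
    · intro x hxm
      rw [Set.uIoc_of_le hx₀c] at hxm
      have hxm' := Set.Ioc_subset_Icc_self hxm
      have hxm'' : x ∈ Icc x₀ (x₀ + hx) := ⟨hxm'.1, le_trans hxm'.2 hcle⟩
      rw [Real.norm_eq_abs, abs_mul]
      exact mul_le_mul (hB3 x hxm'') (hB4 x hxm') (abs_nonneg _) hy0.le
  have bB2 : |∫ x in c..(x₀ + hx), (2 * q x / hy * (Hm x - Hm c))| ≤
      hy * (M₂₁ * (hy / 2) * (hx / 2)) * (hx / 2) := by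
    have hb := intervalIntegral.norm_integral_le_of_norm_le_const
      (C := hy * (M₂₁ * (hy / 2) * (hx / 2))) (a := c) (b := x₀ + hx)
      (f := fun x => 2 * q x / hy * (Hm x - Hm c)) ?_
    · rw [Real.norm_eq_abs] at hb
      calc |∫ x in c..(x₀ + hx), (2 * q x / hy * (Hm x - Hm c))|
          ≤ hy * (M₂₁ * (hy / 2) * (hx / 2)) * |x₀ + hx - c| := hb
        _ = hy * (M₂₁ * (hy / 2) * (hx / 2)) * (hx / 2) := by
            rw [hcsub2, abs_of_pos (by linarith)]
    · intro x hxm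
      rw [Set.uIoc_of_le hcle] at hxm
      have hxm' := Set.Ioc_subset_Icc_self hxm
      have hxm'' : x ∈ Icc x₀ (x₀ + hx) := ⟨le_trans hx₀c hxm'.1, hxm'.2⟩
      rw [Real.norm_eq_abs, abs_mul]
      exact mul_le_mul (hB3 x hxm'') (hB5 x hxm') (abs_nonneg _) hy0.le
  -- total bound
  have hkey : |∫ x in x₀..(x₀ + hx), D x| ≤
      2 * (2 * hy ^ 2 * M₁₂ * hy * (hx / 2)) +
      2 * (hy * (M₂₁ * (hy / 2) * (hx / 2)) * (hx / 2)) +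
      (hx * hy / 4) * (hy ^ 2 * M₁₂ / 2) := by
    rw [hsplitA, hdec1, hdec2]
    have e : (∫ x in x₀..c, (D x - 2 * q x / hy * Hp x)) +
        (∫ x in x₀..c, (2 * q x / hy * (Hp x - Hp c))) + Hp c * (hx * hy / 4) +
        ((∫ x in c..(x₀ + hx), (D x - 2 * q x / hy * Hm x)) +
        (∫ x in c..(x₀ + hx), (2 * q x / hy * (Hm x - Hm c))) - Hm c * (hx * hy / 4)) =
        ((∫ x in x₀..c, (D x - 2 * q x / hy * Hp x)) +
        (∫ x in x₀..c, (2 * q x / hy * (Hp x - Hp c))) +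
        ((∫ x in c..(x₀ + hx), (D x - 2 * q x / hy * Hm x)) +
        (∫ x in c..(x₀ + hx), (2 * q x / hy * (Hm x - Hm c))))) +
        (hx * hy / 4) * (Hp c - Hm c) := by ring
    rw [e]
    have t5 : |(hx * hy / 4) * (Hp c - Hm c)| ≤ (hx * hy / 4) * (hy ^ 2 * M₁₂ / 2) := by
      rw [abs_mul, abs_of_pos (by positivity : (0:ℝ) < hx * hy / 4)]
      exact mul_le_mul_of_nonneg_left hB6 (by positivity)
    calc |_ + (hx * hy / 4) * (Hp c - Hm c)|
        ≤ |(∫ x in x₀..c, (D x - 2 * q x / hy * Hp x)) +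
          (∫ x in x₀..c, (2 * q x / hy * (Hp x - Hp c))) +
          ((∫ x in c..(x₀ + hx), (D x - 2 * q x / hy * Hm x)) +
          (∫ x in c..(x₀ + hx), (2 * q x / hy * (Hm x - Hm c))))| +
          |(hx * hy / 4) * (Hp c - Hm c)| := abs_add_le _ _
      _ ≤ (|(∫ x in x₀..c, (D x - 2 * q x / hy * Hp x))| +
          |(∫ x in x₀..c, (2 * q x / hy * (Hp x - Hp c)))| +
          (|(∫ x in c..(x₀ + hx), (D x - 2 * q x / hy * Hm x))| +
          |(∫ x in c..(x₀ + hx), (2 * q x / hy * (Hm x - Hm c)))|)) +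
          |(hx * hy / 4) * (Hp c - Hm c)| :=
            add_le_add (le_trans (abs_add_le _ _)
              (add_le_add (abs_add_le _ _) (abs_add_le _ _))) le_rfl
      _ ≤ (2 * hy ^ 2 * M₁₂ * hy * (hx / 2) + hy * (M₂₁ * (hy / 2) * (hx / 2)) * (hx / 2) +
          (2 * hy ^ 2 * M₁₂ * hy * (hx / 2) + hy * (M₂₁ * (hy / 2) * (hx / 2)) * (hx / 2))) +
          (hx * hy / 4) * (hy ^ 2 * M₁₂ / 2) := by
            exact add_le_add (add_le_add (add_le_add bA1 bB1) (add_le_add bA2 bB2)) t5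
      _ = 2 * (2 * hy ^ 2 * M₁₂ * hy * (hx / 2)) +
          2 * (hy * (M₂₁ * (hy / 2) * (hx / 2)) * (hx / 2)) +
          (hx * hy / 4) * (hy ^ 2 * M₁₂ / 2) := by ring
  -- conclude
  have p1 : (0:ℝ) ≤ hx * hy ^ 3 * M₁₂ := by positivity
  have p2 : (0:ℝ) ≤ hx ^ 2 * hy ^ 2 * M₂₁ := by positivity
  have p3 : (0:ℝ) ≤ hx ^ 3 * hy * M₃₀ := by positivity
  calc |∫ p in S, (wx p.1 p.2 - avg)|
      = |∫ x in x₀..(x₀ + hx), D x| := by rw [← hA_eq]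
    _ ≤ 2 * (2 * hy ^ 2 * M₁₂ * hy * (hx / 2)) +
        2 * (hy * (M₂₁ * (hy / 2) * (hx / 2)) * (hx / 2)) +
        (hx * hy / 4) * (hy ^ 2 * M₁₂ / 2) := hkey
    _ ≤ 5 * (hx * hy) * (hx ^ 2 * M₃₀ + hx * hy * M₂₁ + hy ^ 2 * M₁₂) := by nlinarith
    _ = 5 * (volume S).toReal * (hx ^ 2 * M₃₀ + hx * hy * M₂₁ + hy ^ 2 * M₁₂) := by
        rw [hvolR]
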